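/- Let η be a real random variable with E[|η|³] < ∞ and let φ : ℝ → ℝ be twice differentiable with second derivative Lipschitz with constant L ≥ 0. Then φ(η) is integrable and | E[φ(η)] − φ(E[η]) − (1/2) φ''(E[η]) · Var(η) | ≤ (L/6) · E[ |η − E[η]|³ ]. -/

import Mathlib

open MeasureTheory ProbabilityTheory intervalIntegral

lemma key_bound (f f' : ℝ → ℝ) (hf : ∀ x, HasDerivAt f (f' x) x) (hc : Continuous f')
    (a x C : ℝ) (n : ℕ) (hb : ∀ t, |f' t| ≤ C * |t - a| ^ n) :
    |f x - f a| ≤ C / (n + 1) * |x - a| ^ (n + 1) := by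
  have hint : ∫ t in a..x, f' t = f x - f a :=
    integral_eq_sub_of_hasDerivAt (fun t _ => hf t) (hc.intervalIntegrable a x)
  rw [← hint]
  calc |∫ t in a..x, f' t| ≤ ∫ t in Set.uIoc a x, |f' t| := by
        simpa [Real.norm_eq_abs] using
          (norm_integral_le_integral_norm_uIoc : ‖∫ t in a..x, f' t‖ ≤ _)
    _ ≤ ∫ t in Set.uIoc a x, C * |t - a| ^ n := by
        refine setIntegral_mono_on ?_ ?_ measurableSet_uIoc fun t _ => hb t
        · exact (hc.abs.integrableOn_uIoc)
        · exact ((continuous_const.mul (((continuous_id.sub continuous_const).abs).pow n)).integrableOn_uIoc)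
    _ = C * (|x - a| ^ (n + 1) / (n + 1)) := by
        rw [MeasureTheory.integral_const_mul, integral_pow_abs_sub_uIoc]
    _ = C / (n + 1) * |x - a| ^ (n + 1) := by ring


lemma taylor_two (φ φ' φ'' : ℝ → ℝ)
    (hφ' : ∀ x : ℝ, HasDerivAt φ (φ' x) x)
    (hφ'' : ∀ x : ℝ, HasDerivAt φ' (φ'' x) x)
    (L : NNReal) (hφ''_lip : LipschitzWith L φ'') (m x : ℝ) :
    |φ x - φ m - φ' m * (x - m) - φ'' m / 2 * (x - m) ^ 2| ≤ (L : ℝ) / 6 * |x - m| ^ 3 := by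
  have hφ'c : Continuous φ' :=
    continuous_iff_continuousAt.2 fun y => (hφ'' y).continuousAt
  -- step 1
  have step1 : ∀ t : ℝ, |φ' t - φ' m - φ'' m * (t - m)| ≤ (L : ℝ) / 2 * |t - m| ^ 2 := by
    intro t
    have h := key_bound (fun y => φ' y - φ'' m * y) (fun y => φ'' y - φ'' m)
      (fun y => by exact ((hφ'' y).sub ((hasDerivAt_id' y).const_mul (φ'' m))).congr_deriv (by ring))
      (hφ''_lip.continuous.sub continuous_const) m t (L : ℝ) 1
      (fun s => by
        have := hφ''_lip.dist_le_mul s m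
        simpa [Real.dist_eq, pow_one] using this)
    have e1 : φ' t - φ'' m * t - (φ' m - φ'' m * m) = φ' t - φ' m - φ'' m * (t - m) := by ring
    rw [e1] at h
    norm_num at h
    convert h using 2 <;> norm_num
  -- step 2
  have h := key_bound (fun y => φ y - φ' m * y - φ'' m / 2 * (y - m) ^ 2)
    (fun y => φ' y - φ' m - φ'' m * (y - m))
    (fun y => by
      have := ((hφ' y).sub ((hasDerivAt_id y).const_mul (φ' m))).sub
        ((((hasDerivAt_id y).sub_const m).pow 2).const_mul (φ'' m / 2))
      exact this.congr_deriv (by simp only [id]; push_cast; ring))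
    (by fun_prop)
    m x ((L : ℝ) / 2) 2 step1
  have e2 : φ x - φ' m * x - φ'' m / 2 * (x - m) ^ 2 -
      (φ m - φ' m * m - φ'' m / 2 * (m - m) ^ 2)
      = φ x - φ m - φ' m * (x - m) - φ'' m / 2 * (x - m) ^ 2 := by ring
  rw [e2] at h
  norm_num at h
  convert h using 2
  ring

/-- Lemma 3.4: second-order expansion of `E[φ(η)]` with cubic remainder, for `φ`
twice differentiable with Lipschitz second derivative. -/
theorem second_order_expansion_of_expectation
    {Ω : Type*} [MeasurableSpace Ω] (P : Measure Ω) [IsProbabilityMeasure P]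
    (η : Ω → ℝ) (hη_meas : Measurable η)
    (hη3 : Integrable (fun ω => |η ω| ^ 3) P)
    (φ φ' φ'' : ℝ → ℝ)
    (hφ' : ∀ x : ℝ, HasDerivAt φ (φ' x) x)
    (hφ'' : ∀ x : ℝ, HasDerivAt φ' (φ'' x) x)
    (L : NNReal) (hφ''_lip : LipschitzWith L φ'') :
    Integrable (fun ω => φ (η ω)) P ∧
    |(∫ ω, φ (η ω) ∂P) - φ (∫ ω, η ω ∂P)
        - 1 / 2 * φ'' (∫ ω, η ω ∂P) * variance η P|
      ≤ (L : ℝ) / 6 * ∫ ω, |η ω - ∫ ω', η ω' ∂P| ^ 3 ∂P := by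
  set m := ∫ ω, η ω ∂P with hm
  have hφc : Continuous φ := continuous_iff_continuousAt.2 fun y => (hφ' y).continuousAt
  -- integrability of η
  have h1 : Integrable η P := by
    refine Integrable.mono' ((integrable_const 1).add hη3) hη_meas.aestronglyMeasurable
      (Filter.Eventually.of_forall fun ω => ?_)
    have ha : (0:ℝ) ≤ |η ω| := abs_nonneg _
    simp only [Real.norm_eq_abs, Pi.add_apply]
    nlinarith [mul_nonneg ha (sq_nonneg (|η ω| - 1)), sq_nonneg (|η ω| - 1)]
  -- integrability of |η - m|^3
  have h3 : Integrable (fun ω => |η ω - m| ^ 3) P := by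
    refine Integrable.mono' ((hη3.const_mul 4).add (integrable_const (4 * |m| ^ 3)))
      (((hη_meas.sub measurable_const).abs.pow_const 3).aestronglyMeasurable)
      (Filter.Eventually.of_forall fun ω => ?_)
    have ha : (0:ℝ) ≤ |η ω| := abs_nonneg _
    have hb : (0:ℝ) ≤ |m| := abs_nonneg _
    have htri : |η ω - m| ≤ |η ω| + |m| := abs_sub _ _
    have h0 : (0:ℝ) ≤ |η ω - m| := abs_nonneg _
    simp only [Real.norm_eq_abs, Pi.add_apply, abs_abs, abs_pow]
    calc |η ω - m| ^ 3 ≤ (|η ω| + |m|) ^ 3 := pow_le_pow_left₀ h0 htri 3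
      _ ≤ 4 * |η ω| ^ 3 + 4 * |m| ^ 3 := by
          nlinarith [mul_nonneg (add_nonneg ha hb) (sq_nonneg (|η ω| - |m|))]
  -- integrability of (η - m)^2
  have h2 : Integrable (fun ω => (η ω - m) ^ 2) P := by
    refine Integrable.mono' ((integrable_const 1).add h3)
      (((hη_meas.sub measurable_const).pow_const 2).aestronglyMeasurable)
      (Filter.Eventually.of_forall fun ω => ?_)
    have hb : (0:ℝ) ≤ |η ω - m| := abs_nonneg _
    simp only [Real.norm_eq_abs, Pi.add_apply, abs_pow, sq_abs]
    have : |η ω - m| ^ 2 ≤ 1 + |η ω - m| ^ 3 := by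
      nlinarith [mul_nonneg hb (sq_nonneg (|η ω - m| - 1)), sq_nonneg (|η ω - m| - 1)]
    calc (η ω - m) ^ 2 = |η ω - m| ^ 2 := (sq_abs _).symm
      _ ≤ 1 + |η ω - m| ^ 3 := this
  -- η ∈ L²
  have hsq : Integrable (fun ω => η ω ^ 2) P := by
    refine Integrable.mono' ((integrable_const 1).add hη3)
      ((hη_meas.pow_const 2).aestronglyMeasurable)
      (Filter.Eventually.of_forall fun ω => ?_)
    have hb : (0:ℝ) ≤ |η ω| := abs_nonneg _
    simp only [Real.norm_eq_abs, Pi.add_apply, abs_pow, sq_abs]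
    calc η ω ^ 2 = |η ω| ^ 2 := (sq_abs _).symm
      _ ≤ 1 + |η ω| ^ 3 := by
        nlinarith [mul_nonneg hb (sq_nonneg (|η ω| - 1)), sq_nonneg (|η ω| - 1)]
  have hmem : MemLp η 2 P :=
    (memLp_two_iff_integrable_sq hη_meas.aestronglyMeasurable).2 hsq
  have hvar : variance η P = ∫ ω, (η ω - m) ^ 2 ∂P := by
    rw [variance_eq_integral hη_meas.aemeasurable]
  -- remainder function
  set g : ℝ → ℝ := fun y => φ y - φ m - φ' m * (y - m) - φ'' m / 2 * (y - m) ^ 2 with hgdef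
  have hgb : ∀ y, |g y| ≤ (L : ℝ) / 6 * |y - m| ^ 3 :=
    fun y => taylor_two φ φ' φ'' hφ' hφ'' L hφ''_lip m y
  have hgc : Continuous g := by
    apply (((hφc.sub continuous_const).sub
      (continuous_const.mul ((continuous_id.sub continuous_const)))).sub
      (continuous_const.mul (((continuous_id.sub continuous_const)).pow 2)))
  have hgint : Integrable (fun ω => g (η ω)) P := by
    refine Integrable.mono' (h3.const_mul ((L : ℝ) / 6))
      ((hgc.measurable.comp hη_meas).aestronglyMeasurable)
      (Filter.Eventually.of_forall fun ω => ?_)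
    simpa [Real.norm_eq_abs] using hgb (η ω)
  have hηm : Integrable (fun ω => η ω - m) P := h1.sub (integrable_const m)
  have hlin : ∫ ω, (η ω - m) ∂P = 0 := by
    rw [integral_sub h1 (integrable_const m), MeasureTheory.integral_const]
    simp [hm]
  have hrepr : (fun ω => φ (η ω)) =
      fun ω => g (η ω) + (φ m + φ' m * (η ω - m) + φ'' m / 2 * (η ω - m) ^ 2) := by
    funext ω; simp only [hgdef]; ring
  have hrest : Integrable
      (fun ω => φ m + φ' m * (η ω - m) + φ'' m / 2 * (η ω - m) ^ 2) P :=
    ((integrable_const (φ m)).add (hηm.const_mul _)).add (h2.const_mul _)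
  have hφint : Integrable (fun ω => φ (η ω)) P := by
    rw [hrepr]; exact hgint.add hrest
  refine ⟨hφint, ?_⟩
  have hEφ : ∫ ω, φ (η ω) ∂P = (∫ ω, g (η ω) ∂P)
      + (φ m + φ'' m / 2 * ∫ ω, (η ω - m) ^ 2 ∂P) := by
    have hA : Integrable (fun ω => φ m + φ' m * (η ω - m)) P :=
      (integrable_const (φ m)).add (hηm.const_mul (φ' m))
    have hB : Integrable (fun ω => φ'' m / 2 * (η ω - m) ^ 2) P :=
      h2.const_mul _
    rw [hrepr, integral_add hgint hrest]
    congr 1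
    rw [show (∫ ω, (φ m + φ' m * (η ω - m) + φ'' m / 2 * (η ω - m) ^ 2) ∂P)
        = (∫ ω, (φ m + φ' m * (η ω - m)) ∂P) + ∫ ω, φ'' m / 2 * (η ω - m) ^ 2 ∂P
      from integral_add hA hB,
      show (∫ ω, (φ m + φ' m * (η ω - m)) ∂P)
        = (∫ _ω, φ m ∂P) + ∫ ω, φ' m * (η ω - m) ∂P
      from integral_add (integrable_const (φ m)) (hηm.const_mul (φ' m)),
      MeasureTheory.integral_const, MeasureTheory.integral_const_mul,
      MeasureTheory.integral_const_mul, hlin]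
    simp
  have hrw : (∫ ω, φ (η ω) ∂P) - φ m - 1 / 2 * φ'' m * variance η P
      = ∫ ω, g (η ω) ∂P := by
    rw [hEφ, hvar]; ring
  rw [hrw]
  calc |∫ ω, g (η ω) ∂P| ≤ ∫ ω, |g (η ω)| ∂P := by
        simpa [Real.norm_eq_abs] using norm_integral_le_integral_norm (fun ω => g (η ω)) (μ := P)
    _ ≤ ∫ ω, (L : ℝ) / 6 * |η ω - m| ^ 3 ∂P := by
        refine integral_mono hgint.abs (h3.const_mul _) fun ω => hgb (η ω)
    _ = (L : ℝ) / 6 * ∫ ω, |η ω - m| ^ 3 ∂P := MeasureTheory.integral_const_mul _ _
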